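/- Let h : ℝⁿ → ℝⁿ be a bi-Lipschitz bijection with h(0) = 0, and A ⊆ ℝⁿ with 0 ∈ closure(A \ {0}). Then D(h(A)) ⊆ D(h(LD(A))), where LD(A) is the cone over D(A). Moreover, if A satisfies condition (SSP), then D(h(A)) = D(h(LD(A))). -/

import Mathlib

open Filter Metric Topology MeasureTheory

noncomputable section

abbrev E (n : ℕ) := EuclideanSpace ℝ (Fin n)

/-- Direction set of `A` at the origin. -/
def Dir (n : ℕ) (A : Set (E n)) : Set (E n) :=
  {a | ‖a‖ = 1 ∧ ∃ x : ℕ → E n, (∀ i, x i ∈ A \ {0}) ∧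
    Tendsto x atTop (nhds (0 : E n)) ∧
    Tendsto (fun i => (‖x i‖)⁻¹ • x i) atTop (nhds a)}

/-- Sea-tangle neighbourhood of degree `d` and width `C`. -/
def STg (n : ℕ) (d C : ℝ) (A : Set (E n)) : Set (E n) :=
  {x | Metric.infDist x A ≤ C * ‖x‖ ^ d}

/-- Cone over the direction set (real tangent cone). -/
def LD (n : ℕ) (A : Set (E n)) : Set (E n) :=
  {x | ∃ a ∈ Dir n A, ∃ t : ℝ, 0 ≤ t ∧ x = t • a}

/-- Sequence selection property. -/
def SSP (n : ℕ) (S : Set (E n)) : Prop :=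
  ∀ a : ℕ → E n, (∀ m, a m ≠ 0) → Tendsto a atTop (nhds (0 : E n)) →
    (∃ L ∈ Dir n S, Tendsto (fun m => (‖a m‖)⁻¹ • a m) atTop (nhds L)) →
    ∀ ε > (0:ℝ), ∃ b : ℕ → E n, (∀ m, b m ∈ S) ∧
      ∀ᶠ m in atTop, ‖a m - b m‖ ≤ ε * min ‖a m‖ ‖b m‖

/-- ST-equivalence of set-germs at the origin. -/
def STEquiv (n : ℕ) (A B : Set (E n)) : Prop :=
  ∃ d₁ > (1:ℝ), ∃ C₁ > (0:ℝ), ∃ d₂ > (1:ℝ), ∃ C₂ > (0:ℝ), ∃ ε > (0:ℝ),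
    B ∩ ball (0 : E n) ε ⊆ STg n d₁ C₁ A ∧ A ∩ ball (0 : E n) ε ⊆ STg n d₂ C₂ B

/-- Normalization estimate. -/
lemma normalize_sub_le {n : ℕ} (u v : E n) (hu : u ≠ 0) (hv : v ≠ 0) :
    ‖‖u‖⁻¹ • u - ‖v‖⁻¹ • v‖ ≤ 2 * ‖u - v‖ / ‖v‖ := by
  have hun : (0:ℝ) < ‖u‖ := norm_pos_iff.mpr hu
  have hvn : (0:ℝ) < ‖v‖ := norm_pos_iff.mpr hv
  have key : ‖u‖⁻¹ • u - ‖v‖⁻¹ • v = (‖u‖⁻¹ - ‖v‖⁻¹) • u + ‖v‖⁻¹ • (u - v) := by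
    rw [sub_smul, smul_sub]; abel
  rw [key]
  have e1 : ‖u‖⁻¹ - ‖v‖⁻¹ = (‖v‖ - ‖u‖) / (‖u‖ * ‖v‖) := by
    field_simp
  have h1 : ‖(‖u‖⁻¹ - ‖v‖⁻¹) • u‖ = |‖v‖ - ‖u‖| / ‖v‖ := by
    rw [norm_smul, e1, Real.norm_eq_abs, abs_div, abs_mul, abs_of_pos hun, abs_of_pos hvn]
    field_simp
  have h2 : ‖‖v‖⁻¹ • (u - v)‖ = ‖u - v‖ / ‖v‖ := by
    rw [norm_smul, Real.norm_eq_abs, abs_of_pos (inv_pos.mpr hvn)]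
    field_simp
  calc ‖(‖u‖⁻¹ - ‖v‖⁻¹) • u + ‖v‖⁻¹ • (u - v)‖
      ≤ ‖(‖u‖⁻¹ - ‖v‖⁻¹) • u‖ + ‖‖v‖⁻¹ • (u - v)‖ := norm_add_le _ _
    _ = |‖v‖ - ‖u‖| / ‖v‖ + ‖u - v‖ / ‖v‖ := by rw [h1, h2]
    _ ≤ ‖u - v‖ / ‖v‖ + ‖u - v‖ / ‖v‖ := by
        gcongr
        calc |‖v‖ - ‖u‖| ≤ ‖v - u‖ := abs_norm_sub_norm_le v u
          _ = ‖u - v‖ := norm_sub_rev v u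
    _ = 2 * ‖u - v‖ / ‖v‖ := by ring

/-- ε-characterization of membership in the direction set. -/
lemma mem_Dir_iff {n : ℕ} (S : Set (E n)) (a : E n) :
    a ∈ Dir n S ↔ ‖a‖ = 1 ∧ ∀ ε > (0:ℝ), ∃ x, x ∈ S ∧ x ≠ 0 ∧ ‖x‖ < ε ∧
      ‖‖x‖⁻¹ • x - a‖ < ε := by
  constructor
  · rintro ⟨ha, x, hxm, hx0, hxa⟩
    refine ⟨ha, fun ε hε => ?_⟩
    have h1 : ∀ᶠ i in atTop, ‖x i‖ < ε := by
      have := hx0.eventually (Metric.ball_mem_nhds (0 : E n) hε)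
      simpa [mem_ball_zero_iff] using this
    have h2 : ∀ᶠ i in atTop, ‖‖x i‖⁻¹ • x i - a‖ < ε := by
      have := hxa.eventually (Metric.ball_mem_nhds a hε)
      simpa [mem_ball_iff_norm, dist_eq_norm] using this
    obtain ⟨i, hi1, hi2⟩ := (h1.and h2).exists
    exact ⟨x i, (hxm i).1, by simpa using (hxm i).2, hi1, hi2⟩
  · rintro ⟨ha, H⟩
    choose x hxS hx0 hxn hxa using fun k : ℕ => H (1 / ((k:ℝ) + 1)) (by positivity)
    refine ⟨ha, x, fun i => ⟨hxS i, by simpa using hx0 i⟩, ?_, ?_⟩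
    · rw [tendsto_zero_iff_norm_tendsto_zero]
      exact squeeze_zero (fun i => norm_nonneg _) (fun i => (hxn i).le)
        tendsto_one_div_add_atTop_nhds_zero_nat
    · rw [tendsto_iff_norm_sub_tendsto_zero]
      exact squeeze_zero (fun i => norm_nonneg _) (fun i => (hxa i).le)
        tendsto_one_div_add_atTop_nhds_zero_nat

/-- The direction set is closed under limits. -/
lemma Dir_mem_of_tendsto {n : ℕ} {S : Set (E n)} {c : ℕ → E n} {L : E n}
    (hc : ∀ j, c j ∈ Dir n S) (hL : Tendsto c atTop (𝓝 L)) : L ∈ Dir n S := by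
  rw [mem_Dir_iff]
  have hnorm : ‖L‖ = 1 := by
    have h1 : Tendsto (fun j => ‖c j‖) atTop (𝓝 ‖L‖) := hL.norm
    have h2 : (fun j => ‖c j‖) = fun _ => (1:ℝ) := funext fun j => (hc j).1
    rw [h2] at h1
    exact tendsto_nhds_unique h1 tendsto_const_nhds
  refine ⟨hnorm, fun ε hε => ?_⟩
  have : ∀ᶠ j in atTop, ‖c j - L‖ < ε / 2 := by
    have := hL.eventually (Metric.ball_mem_nhds L (by positivity : (0:ℝ) < ε / 2))
    simpa [mem_ball_iff_norm, dist_eq_norm] using this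
  obtain ⟨j, hj⟩ := this.exists
  obtain ⟨x, hxS, hx0, hxn, hxa⟩ := ((mem_Dir_iff S (c j)).mp (hc j)).2 (ε/2) (by positivity)
  refine ⟨x, hxS, hx0, by linarith, ?_⟩
  calc ‖‖x‖⁻¹ • x - L‖ ≤ ‖‖x‖⁻¹ • x - c j‖ + ‖c j - L‖ := norm_sub_le_norm_sub_add_norm_sub _ _ _
    _ < ε := by linarith

/-- Small points of `A` have directions close to `Dir A`. -/
lemma approx_dir {n : ℕ} (A : Set (E n)) {δ : ℝ} (hδ : 0 < δ) :
    ∃ r > (0:ℝ), ∀ x ∈ A, x ≠ 0 → ‖x‖ < r → ∃ c ∈ Dir n A, ‖‖x‖⁻¹ • x - c‖ < δ := by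
  by_contra hcon
  push_neg at hcon
  choose x hxA hx0 hxr hxd using fun k : ℕ => hcon (1 / ((k:ℝ) + 1)) (by positivity)
  have hmem : ∀ k, ‖x k‖⁻¹ • x k ∈ sphere (0 : E n) 1 := fun k => by
    rw [mem_sphere_zero_iff_norm]
    exact norm_smul_inv_norm (hx0 k)
  obtain ⟨c, hcs, φ, hφ, hconv⟩ :=
    (isCompact_sphere (0 : E n) 1).tendsto_subseq hmem
  have hx0' : Tendsto (fun k => x (φ k)) atTop (𝓝 (0 : E n)) := by
    rw [tendsto_zero_iff_norm_tendsto_zero]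
    refine squeeze_zero (fun i => norm_nonneg _) (fun i => ?_)
      tendsto_one_div_add_atTop_nhds_zero_nat
    refine le_trans (hxr (φ i)).le ?_
    have hle : (i:ℝ) + 1 ≤ (φ i : ℝ) + 1 := by exact_mod_cast Nat.succ_le_succ hφ.le_apply
    exact one_div_le_one_div_of_le (by positivity) hle
  have hcDir : c ∈ Dir n A := by
    refine ⟨mem_sphere_zero_iff_norm.mp hcs, fun k => x (φ k),
      fun k => ⟨hxA (φ k), by simpa using hx0 (φ k)⟩, hx0', hconv⟩
  have : ∀ᶠ k in atTop, ‖‖x (φ k)‖⁻¹ • x (φ k) - c‖ < δ := by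
    have := hconv.eventually (Metric.ball_mem_nhds c hδ)
    simpa [Function.comp, mem_ball_iff_norm, dist_eq_norm] using this
  obtain ⟨k, hk⟩ := this.exists
  exact absurd hk (not_lt.mpr (hxd (φ k) c hcDir))

/-- Uniform version of SSP near the origin. -/
lemma ssp_uniform {n : ℕ} {A : Set (E n)} (hS : SSP n A) {ε' : ℝ} (hε' : 0 < ε') :
    ∃ r > (0:ℝ), ∀ z ∈ LD n A, z ≠ 0 → ‖z‖ < r →
      ∃ b ∈ A, ‖z - b‖ ≤ ε' * min ‖z‖ ‖b‖ := by
  by_contra hcon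
  push_neg at hcon
  choose z hzLD hz0 hzr hzb using fun k : ℕ => hcon (1 / ((k:ℝ) + 1)) (by positivity)
  choose c hc t ht hzt using fun k => hzLD k
  have hnorm : ∀ k, ‖z k‖⁻¹ • z k = c k := by
    intro k
    have hck : ‖c k‖ = 1 := (hc k).1
    have htpos : 0 < t k := by
      rcases lt_or_eq_of_le (ht k) with h' | h'
      · exact h'
      · exfalso; exact hz0 k (by rw [hzt k, ← h', zero_smul])
    rw [hzt k, norm_smul, Real.norm_eq_abs, abs_of_pos htpos, hck, mul_one, smul_smul,
      inv_mul_cancel₀ (ne_of_gt htpos), one_smul]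
  have hmem : ∀ k, c k ∈ sphere (0 : E n) 1 := fun k =>
    mem_sphere_zero_iff_norm.mpr (hc k).1
  obtain ⟨L, hLs, φ, hφ, hconv⟩ := (isCompact_sphere (0 : E n) 1).tendsto_subseq hmem
  have hLDir : L ∈ Dir n A := Dir_mem_of_tendsto (fun j => hc (φ j)) hconv
  have hz0' : Tendsto (fun k => z (φ k)) atTop (𝓝 (0 : E n)) := by
    rw [tendsto_zero_iff_norm_tendsto_zero]
    refine squeeze_zero (fun i => norm_nonneg _) (fun i => ?_)
      tendsto_one_div_add_atTop_nhds_zero_nat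
    refine le_trans (hzr (φ i)).le ?_
    have hle : (i:ℝ) + 1 ≤ (φ i : ℝ) + 1 := by exact_mod_cast Nat.succ_le_succ hφ.le_apply
    exact one_div_le_one_div_of_le (by positivity) hle
  obtain ⟨b, hbA, hev⟩ := hS (fun k => z (φ k)) (fun k => hz0 (φ k)) hz0'
    ⟨L, hLDir, by simpa [hnorm, Function.comp_def] using hconv⟩ ε' hε'
  obtain ⟨m, hm⟩ := hev.exists
  exact absurd hm (not_le.mpr (hzb (φ m) (b m) (hbA m)))

set_option maxHeartbeats 1000000 in
theorem stmt11 (n : ℕ) (h : E n → E n) (hbij : Function.Bijective h) (hh0 : h 0 = 0)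
    (K₁ K₂ : ℝ) (hK₁ : 0 < K₁) (hK : K₁ ≤ K₂)
    (hlip : ∀ x y : E n, K₁ * ‖x - y‖ ≤ ‖h x - h y‖ ∧ ‖h x - h y‖ ≤ K₂ * ‖x - y‖)
    (A : Set (E n)) (hA : (0 : E n) ∈ closure (A \ {0})) :
    Dir n (h '' A) ⊆ Dir n (h '' (LD n A)) ∧
    (SSP n A → Dir n (h '' A) = Dir n (h '' (LD n A))) := by
  have hK₂ : 0 < K₂ := lt_of_lt_of_le hK₁ hK
  have hlow : ∀ x : E n, K₁ * ‖x‖ ≤ ‖h x‖ := by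
    intro x
    have := (hlip x 0).1
    simpa [hh0] using this
  have hup : ∀ x : E n, ‖h x‖ ≤ K₂ * ‖x‖ := by
    intro x
    have := (hlip x 0).2
    simpa [hh0] using this
  have hinj : ∀ x : E n, x ≠ 0 → h x ≠ 0 := by
    intro x hx hc
    exact hx (hbij.injective (hc.trans hh0.symm))
  have forward : Dir n (h '' A) ⊆ Dir n (h '' (LD n A)) := by
    intro a ha
    obtain ⟨hanorm, H⟩ := (mem_Dir_iff _ _).mp ha
    rw [mem_Dir_iff]
    refine ⟨hanorm, fun ε hε => ?_⟩
    set δ := K₁ * ε / (8 * K₂) with hδdef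
    have hδ : 0 < δ := by positivity
    obtain ⟨r, hr, hAppr⟩ := approx_dir A hδ
    set ε₀ := min (ε/2) (min (K₁ * r) (ε * K₁ / (2 * K₂))) with hε₀def
    have hε₀ : 0 < ε₀ := by positivity
    obtain ⟨w, hwS, hw0, hwn, hwa⟩ := H ε₀ hε₀
    obtain ⟨x, hxA, rfl⟩ := hwS
    have hx0 : x ≠ 0 := fun h' => hw0 (by rw [h', hh0])
    have hxn : (0:ℝ) < ‖x‖ := norm_pos_iff.mpr hx0
    have hxr : ‖x‖ < r := by
      have h1 : K₁ * ‖x‖ ≤ ‖h x‖ := hlow x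
      have h2 : ‖h x‖ < K₁ * r := lt_of_lt_of_le hwn (le_trans (min_le_right _ _) (min_le_left _ _))
      nlinarith
    obtain ⟨c, hcDir, hcx⟩ := hAppr x hxA hx0 hxr
    have hcn : ‖c‖ = 1 := hcDir.1
    set z := ‖x‖ • c with hzdef
    have hzLD : z ∈ LD n A := ⟨c, hcDir, ‖x‖, norm_nonneg x, rfl⟩
    have hzn : ‖z‖ = ‖x‖ := by
      rw [hzdef, norm_smul, Real.norm_eq_abs, abs_of_pos hxn, hcn, mul_one]
    have hz0 : z ≠ 0 := by
      intro h'
      have hz' : ‖z‖ = 0 := by rw [h', norm_zero]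
      rw [hzn] at hz'
      exact hx0 (norm_eq_zero.mp hz')
    have hxz : ‖x - z‖ ≤ δ * ‖x‖ := by
      have e : x - z = ‖x‖ • (‖x‖⁻¹ • x - c) := by
        rw [smul_sub, smul_inv_smul₀ (ne_of_gt hxn)]
      rw [e, norm_smul, Real.norm_eq_abs, abs_of_pos hxn]
      nlinarith [hcx.le]
    have hhz0 : h z ≠ 0 := hinj z hz0
    refine ⟨h z, ⟨z, hzLD, rfl⟩, hhz0, ?_, ?_⟩
    · -- norm bound
      have h1 : ‖h z‖ ≤ K₂ * ‖x‖ := by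
        have := hup z
        rwa [hzn] at this
      have h2 : ‖h x‖ < ε * K₁ / (2 * K₂) :=
        lt_of_lt_of_le hwn (le_trans (min_le_right _ _) (min_le_right _ _))
      have h3 : ‖x‖ ≤ ‖h x‖ / K₁ := (le_div_iff₀ hK₁).mpr (by linarith [hlow x])
      calc ‖h z‖ ≤ K₂ * ‖x‖ := h1
        _ ≤ K₂ * (‖h x‖ / K₁) := by gcongr
        _ < K₂ * ((ε * K₁ / (2 * K₂)) / K₁) := by gcongr
        _ = ε / 2 := by field_simp
        _ < ε := by linarith
    · -- direction bound
      have hhx0 : h x ≠ 0 := hw0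
      have hest : ‖‖h z‖⁻¹ • h z - ‖h x‖⁻¹ • h x‖ ≤ 2 * ‖h z - h x‖ / ‖h x‖ :=
        normalize_sub_le (h z) (h x) hhz0 hhx0
      have hd1 : ‖h z - h x‖ ≤ K₂ * (δ * ‖x‖) := by
        refine le_trans (hlip z x).2 ?_
        have : ‖z - x‖ = ‖x - z‖ := norm_sub_rev z x
        rw [this]
        nlinarith
      have hhxl : K₁ * ‖x‖ ≤ ‖h x‖ := hlow x
      have hhxpos : (0:ℝ) < ‖h x‖ := norm_pos_iff.mpr hhx0
      have hfrac : 2 * ‖h z - h x‖ / ‖h x‖ ≤ ε / 4 := by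
        rw [div_le_iff₀ hhxpos]
        have hδ8 : δ * (8 * K₂) = K₁ * ε := by
          rw [hδdef]; field_simp
        nlinarith [norm_nonneg (h z - h x), mul_le_mul_of_nonneg_left hhxl (le_of_lt hε)]
      have hwa2 : ‖‖h x‖⁻¹ • h x - a‖ < ε / 2 :=
        lt_of_lt_of_le hwa (min_le_left _ _)
      calc ‖‖h z‖⁻¹ • h z - a‖
          ≤ ‖‖h z‖⁻¹ • h z - ‖h x‖⁻¹ • h x‖ + ‖‖h x‖⁻¹ • h x - a‖ :=
            norm_sub_le_norm_sub_add_norm_sub _ _ _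
        _ < ε := by linarith
  refine ⟨forward, fun hssp => Set.Subset.antisymm forward ?_⟩
  intro a ha
  obtain ⟨hanorm, H⟩ := (mem_Dir_iff _ _).mp ha
  rw [mem_Dir_iff]
  refine ⟨hanorm, fun ε hε => ?_⟩
  set ε' := min (K₁ * ε / (8 * K₂)) 1 with hε'def
  have hε'pos : 0 < ε' := by positivity
  have hε'le1 : ε' ≤ 1 := min_le_right _ _
  obtain ⟨r, hr, hU⟩ := ssp_uniform hssp hε'pos
  set ε₀ := min (ε/2) (min (K₁ * r) (ε * K₁ / (4 * K₂))) with hε₀def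
  have hε₀ : 0 < ε₀ := by positivity
  obtain ⟨w, hwS, hw0, hwn, hwa⟩ := H ε₀ hε₀
  obtain ⟨z, hzLD, rfl⟩ := hwS
  have hz0 : z ≠ 0 := fun h' => hw0 (by rw [h', hh0])
  have hzn : (0:ℝ) < ‖z‖ := norm_pos_iff.mpr hz0
  have hzr : ‖z‖ < r := by
    have h1 : K₁ * ‖z‖ ≤ ‖h z‖ := hlow z
    have h2 : ‖h z‖ < K₁ * r := lt_of_lt_of_le hwn (le_trans (min_le_right _ _) (min_le_left _ _))
    nlinarith
  obtain ⟨b, hbA, hbz⟩ := hU z hzLD hz0 hzr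
  have hb0 : b ≠ 0 := by
    intro h'
    rw [h', sub_zero, norm_zero] at hbz
    rw [min_eq_right (norm_nonneg z), mul_zero] at hbz
    exact hz0 (norm_le_zero_iff.mp hbz)
  have hbz' : ‖z - b‖ ≤ ε' * ‖z‖ :=
    le_trans hbz (mul_le_mul_of_nonneg_left (min_le_left _ _) hε'pos.le)
  have hbb : ‖b‖ ≤ 2 * ‖z‖ := by
    have h1 : ‖b‖ ≤ ‖z‖ + ‖z - b‖ := by
      calc ‖b‖ = ‖z - (z - b)‖ := by rw [sub_sub_cancel]
        _ ≤ ‖z‖ + ‖z - b‖ := norm_sub_le _ _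
    nlinarith
  have hhb0 : h b ≠ 0 := hinj b hb0
  refine ⟨h b, ⟨b, hbA, rfl⟩, hhb0, ?_, ?_⟩
  · have h1 : ‖h b‖ ≤ K₂ * ‖b‖ := hup b
    have h2 : ‖h z‖ < ε * K₁ / (4 * K₂) :=
      lt_of_lt_of_le hwn (le_trans (min_le_right _ _) (min_le_right _ _))
    have h3 : ‖z‖ ≤ ‖h z‖ / K₁ := (le_div_iff₀ hK₁).mpr (by linarith [hlow z])
    calc ‖h b‖ ≤ K₂ * ‖b‖ := h1
      _ ≤ K₂ * (2 * ‖z‖) := by gcongr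
      _ ≤ K₂ * (2 * (‖h z‖ / K₁)) := by gcongr
      _ < K₂ * (2 * ((ε * K₁ / (4 * K₂)) / K₁)) := by gcongr
      _ = ε / 2 := by field_simp; ring
      _ < ε := by linarith
  · have hhz0 : h z ≠ 0 := hw0
    have hest : ‖‖h b‖⁻¹ • h b - ‖h z‖⁻¹ • h z‖ ≤ 2 * ‖h b - h z‖ / ‖h z‖ :=
      normalize_sub_le (h b) (h z) hhb0 hhz0
    have hd1 : ‖h b - h z‖ ≤ K₂ * (ε' * ‖z‖) := by
      refine le_trans (hlip b z).2 ?_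
      have e : ‖b - z‖ = ‖z - b‖ := norm_sub_rev b z
      rw [e]
      nlinarith
    have hhzl : K₁ * ‖z‖ ≤ ‖h z‖ := hlow z
    have hhzpos : (0:ℝ) < ‖h z‖ := norm_pos_iff.mpr hhz0
    have hfrac : 2 * ‖h b - h z‖ / ‖h z‖ ≤ ε / 4 := by
      rw [div_le_iff₀ hhzpos]
      have hε'8 : ε' * (8 * K₂) ≤ K₁ * ε := by
        have : ε' ≤ K₁ * ε / (8 * K₂) := min_le_left _ _
        calc ε' * (8 * K₂) ≤ (K₁ * ε / (8 * K₂)) * (8 * K₂) := by nlinarith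
          _ = K₁ * ε := by field_simp
      nlinarith [norm_nonneg (h b - h z), mul_le_mul_of_nonneg_left hhzl (le_of_lt hε)]
    have hwa2 : ‖‖h z‖⁻¹ • h z - a‖ < ε / 2 :=
      lt_of_lt_of_le hwa (min_le_left _ _)
    calc ‖‖h b‖⁻¹ • h b - a‖
        ≤ ‖‖h b‖⁻¹ • h b - ‖h z‖⁻¹ • h z‖ + ‖‖h z‖⁻¹ • h z - a‖ :=
          norm_sub_le_norm_sub_add_norm_sub _ _ _
      _ < ε := by linarith
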